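/- arXiv:2209.15505 — 2 statements merged into one kernel-verified Lean document; each statement's English description precedes it below -/
import Mathlib

section
/- (Lemma: evolution of the auxiliary average z̄) For the Momentum Tracking iterates, for every round r ≥ 0 the auxiliary sequence z̄ satisfies z̄^{(r+1)} − z̄^{(r)} = −(η/(1−β)) · (1/N)∑_{i=1}^N ∇F_i(x_i^{(r)};ξ_i^{(r)}). -/
open MeasureTheory
open scoped BigOperators

noncomputable section

/-- Problem data and standing assumptions (lower bound, mixing, smoothness) for
decentralized optimization over `N` nodes in `ℝ^d`. -/
structure MTProblem (N d : ℕ) (Ω : Type) [mΩ : MeasurableSpace Ω] where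
  /-- Probability measure driving the stochastic gradients. -/
  μ : Measure Ω
  prob : IsProbabilityMeasure μ
  fstar : ℝ
  L : ℝ
  σ : ℝ
  p : ℝ
  β : ℝ
  /-- Local objectives `f_i`. -/
  f : Fin N → EuclideanSpace ℝ (Fin d) → ℝ
  /-- Local gradients `∇f_i`. -/
  g : Fin N → EuclideanSpace ℝ (Fin d) → EuclideanSpace ℝ (Fin d)
  /-- Mixing matrix. -/
  W : Fin N → Fin N → ℝ
  /-- Common initial parameter. -/
  x0 : EuclideanSpace ℝ (Fin d)
  hN : 0 < N
  hβ0 : 0 ≤ β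
  hβ1 : β < 1
  hL : 0 < L
  hp0 : 0 < p
  hp1 : p ≤ 1
  hgrad : ∀ i v, HasGradientAt (f i) (g i v) v
  /-- Lower bound: `f⋆ ≤ f(x)` for all `x`. -/
  hlb : ∀ v, fstar ≤ (N : ℝ)⁻¹ * ∑ i, f i v
  /-- `L`-smoothness of each `f_i`. -/
  hsmooth : ∀ i v w, ‖g i v - g i w‖ ≤ L * ‖v - w‖
  hWsymm : ∀ i j, W i j = W j i
  hWrow : ∀ i, ∑ j, W i j = 1
  hWcol : ∀ j, ∑ i, W i j = 1
  /-- Spectral gap: `‖XW − X̄‖_F² ≤ (1−p)‖X − X̄‖_F²`. -/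
  hmix : ∀ X : Fin N → EuclideanSpace ℝ (Fin d),
    ∑ j, ‖(∑ i, W i j • X i) - (N : ℝ)⁻¹ • ∑ i, X i‖ ^ 2
      ≤ (1 - p) * ∑ j, ‖X j - (N : ℝ)⁻¹ • ∑ i, X i‖ ^ 2

namespace MTProblem

variable {N d : ℕ} {Ω : Type} [mΩ : MeasurableSpace Ω]

/-- Global objective `f = (1/N) ∑_i f_i`. -/
def F (P : MTProblem N d Ω) (v : EuclideanSpace ℝ (Fin d)) : ℝ :=
  (N : ℝ)⁻¹ * ∑ i, P.f i v

/-- Gradient of the global objective, `∇f = (1/N) ∑_i ∇f_i`. -/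
def gradF (P : MTProblem N d Ω) (v : EuclideanSpace ℝ (Fin d)) : EuclideanSpace ℝ (Fin d) :=
  (N : ℝ)⁻¹ • ∑ i, P.g i v

end MTProblem

/-- A run of the Momentum Tracking algorithm: trajectories `x, u, c`, realized
stochastic gradients `G r i = ∇F_i(x_i^{(r)}; ξ_i^{(r)})`, together with the update
rules, the standard initialization, and the stochastic-gradient assumptions
(unbiasedness, bounded variance, independence across nodes and rounds in the form
of orthogonality of the noises). -/
structure MTRun {N d : ℕ} {Ω : Type} [mΩ : MeasurableSpace Ω] (P : MTProblem N d Ω) where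
  /-- Step size. -/
  η : ℝ
  hη : 0 < η
  x : ℕ → Fin N → Ω → EuclideanSpace ℝ (Fin d)
  u : ℕ → Fin N → Ω → EuclideanSpace ℝ (Fin d)
  c : ℕ → Fin N → Ω → EuclideanSpace ℝ (Fin d)
  G : ℕ → Fin N → Ω → EuclideanSpace ℝ (Fin d)
  /-- Filtration of the information available at each round. -/
  ℱ : MeasureTheory.Filtration ℕ mΩ
  hx0 : ∀ i, x 0 i = fun _ => P.x0
  hu0 : ∀ i ω, u 0 i ω = (1 - P.β)⁻¹ • (G 0 i ω - (N : ℝ)⁻¹ • ∑ j, G 0 j ω)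
  hc0 : ∀ i, c 0 i = u 0 i
  hu : ∀ r i ω, u (r + 1) i ω = P.β • u r i ω + G r i ω
  hx : ∀ r i ω, x (r + 1) i ω
      = (∑ j, P.W i j • x r j ω) - η • (u (r + 1) i ω - c r i ω)
  hc : ∀ r i ω, c (r + 1) i ω
      = (∑ j, P.W i j • (c r j ω - u (r + 1) j ω)) + u (r + 1) i ω
  hmeas : ∀ r i, MemLp (G r i) 2 P.μ
  hadapted_x : ∀ r i, StronglyMeasurable[ℱ r] (x r i)
  hadapted_G : ∀ r i, StronglyMeasurable[ℱ (r + 1)] (G r i)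
  /-- Unbiasedness: `E[∇F_i(x_i^{(r)};ξ) | ℱ_r] = ∇f_i(x_i^{(r)})`. -/
  hunbiased : ∀ r i,
    MeasureTheory.condExp (ℱ r) P.μ (G r i) =ᵐ[P.μ] fun ω => P.g i (x r i ω)
  /-- Bounded variance. -/
  hvar : ∀ r i, ∫ ω, ‖G r i ω - P.g i (x r i ω)‖ ^ 2 ∂P.μ ≤ P.σ ^ 2
  /-- Independence across nodes and rounds (orthogonality of the noises). -/
  horth : ∀ r s : ℕ, ∀ i j : Fin N, (r, i) ≠ (s, j) →
    ∫ ω, (inner ℝ (G r i ω - P.g i (x r i ω)) (G s j ω - P.g j (x s j ω)) : ℝ) ∂P.μ = 0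

namespace MTRun

variable {N d : ℕ} {Ω : Type} [mΩ : MeasurableSpace Ω] {P : MTProblem N d Ω}

/-- Node-average of the parameters, `x̄^{(r)}`. -/
def xbar (S : MTRun P) (r : ℕ) (ω : Ω) : EuclideanSpace ℝ (Fin d) :=
  (N : ℝ)⁻¹ • ∑ i, S.x r i ω

/-- Node-average of the momenta, `ū^{(r)}`. -/
def ubar (S : MTRun P) (r : ℕ) (ω : Ω) : EuclideanSpace ℝ (Fin d) :=
  (N : ℝ)⁻¹ • ∑ i, S.u r i ω

/-- Node-average of the correction variables, `c̄^{(r)}`. -/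
def cbar (S : MTRun P) (r : ℕ) (ω : Ω) : EuclideanSpace ℝ (Fin d) :=
  (N : ℝ)⁻¹ • ∑ i, S.c r i ω

/-- Auxiliary average `z̄^{(r)}`. -/
def zbar (S : MTRun P) : ℕ → Ω → EuclideanSpace ℝ (Fin d)
  | 0 => S.xbar 0
  | r + 1 => fun ω =>
      (1 - P.β)⁻¹ • S.xbar (r + 1) ω - (P.β * (1 - P.β)⁻¹) • S.xbar r ω

/-- Auxiliary sequence `d_i^{(r)}`. -/
def dseq (S : MTRun P) : ℕ → Fin N → Ω → EuclideanSpace ℝ (Fin d)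
  | 0 => fun i ω => (1 - P.β)⁻¹ • (P.g i (S.xbar 0 ω) - P.gradF (S.xbar 0 ω))
  | r + 1 => fun i ω => P.β • dseq S r i ω + P.g i (S.xbar r ω)

/-- Auxiliary sequence `e_i^{(r)}`. -/
def eseq (S : MTRun P) : ℕ → Fin N → Ω → EuclideanSpace ℝ (Fin d)
  | 0 => fun _ _ => 0
  | r + 1 => fun i ω => P.β • eseq S r i ω + P.gradF (S.xbar r ω)

/-- Node-average `d̄^{(r)}`. -/
def dbar (S : MTRun P) (r : ℕ) (ω : Ω) : EuclideanSpace ℝ (Fin d) :=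
  (N : ℝ)⁻¹ • ∑ i, S.dseq r i ω

/-- Node-average `ē^{(r)}`. -/
def ebar (S : MTRun P) (r : ℕ) (ω : Ω) : EuclideanSpace ℝ (Fin d) :=
  (N : ℝ)⁻¹ • ∑ i, S.eseq r i ω

/-- Consensus distance `Ξ^{(r)} = (1/N) E‖X^{(r)} − X̄^{(r)}‖_F²`. -/
def Xi (S : MTRun P) (r : ℕ) : ℝ :=
  (N : ℝ)⁻¹ * ∫ ω, (∑ i, ‖S.x r i ω - S.xbar r ω‖ ^ 2) ∂P.μ

/-- Tracking error `ℰ^{(r)} = (1/N) E‖D^{(r+1)} − C^{(r)} − E^{(r+1)}‖_F²`. -/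
def EE (S : MTRun P) (r : ℕ) : ℝ :=
  (N : ℝ)⁻¹ *
    ∫ ω, (∑ i, ‖S.dseq (r + 1) i ω - S.c r i ω - S.eseq (r + 1) i ω‖ ^ 2) ∂P.μ

/-- Momentum drift `𝒟^{(r)} = (1/N) E‖D^{(r+1)} − D^{(r)} − E^{(r+1)} + E^{(r)}‖_F²`. -/
def DD (S : MTRun P) (r : ℕ) : ℝ :=
  (N : ℝ)⁻¹ *
    ∫ ω, (∑ i,
      ‖S.dseq (r + 1) i ω - S.dseq r i ω - S.eseq (r + 1) i ω + S.eseq r i ω‖ ^ 2) ∂P.μ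

end MTRun

section Helpers

variable {N d : ℕ} {Ω : Type} [mΩ : MeasurableSpace Ω] {P : MTProblem N d Ω}

lemma ubar_zero' (S : MTRun P) (ω : Ω) : S.ubar 0 ω = 0 := by
  have hN : (N : ℝ) ≠ 0 := Nat.cast_ne_zero.mpr P.hN.ne'
  simp only [MTRun.ubar, S.hu0, ← Finset.smul_sum, Finset.sum_sub_distrib,
    Finset.sum_const, Finset.card_univ, Fintype.card_fin]
  match_scalars <;> field_simp <;> simp

lemma cbar_succ' (S : MTRun P) (r : ℕ) (ω : Ω) : S.cbar (r + 1) ω = S.cbar r ω := by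
  have h : ∑ i, ∑ j, P.W i j • (S.c r j ω - S.u (r + 1) j ω)
      = ∑ j, (S.c r j ω - S.u (r + 1) j ω) := by
    rw [Finset.sum_comm]
    simp [← Finset.sum_smul, P.hWcol]
  simp only [MTRun.cbar, S.hc, Finset.sum_add_distrib, h, Finset.sum_sub_distrib]
  congr 1
  abel

lemma cbar_zero' (S : MTRun P) (r : ℕ) (ω : Ω) : S.cbar r ω = 0 := by
  induction r with
  | zero =>
    have h0 : S.cbar 0 ω = S.ubar 0 ω := by
      simp [MTRun.cbar, MTRun.ubar, S.hc0]
    rw [h0, ubar_zero']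
  | succ k ih => rw [cbar_succ', ih]

lemma csum_zero' (S : MTRun P) (r : ℕ) (ω : Ω) : ∑ i, S.c r i ω = 0 := by
  have hN : (N : ℝ)⁻¹ ≠ 0 := inv_ne_zero (Nat.cast_ne_zero.mpr P.hN.ne')
  have := cbar_zero' S r ω
  simp only [MTRun.cbar, smul_eq_zero] at this
  exact this.resolve_left hN

lemma xbar_succ' (S : MTRun P) (r : ℕ) (ω : Ω) :
    S.xbar (r + 1) ω = S.xbar r ω - S.η • S.ubar (r + 1) ω := by
  have h : ∑ i, ∑ j, P.W i j • S.x r j ω = ∑ j, S.x r j ω := by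
    rw [Finset.sum_comm]
    simp [← Finset.sum_smul, P.hWcol]
  simp only [MTRun.xbar, MTRun.ubar, S.hx, Finset.sum_sub_distrib, h,
    ← Finset.smul_sum, Finset.sum_sub_distrib, csum_zero' S r ω, sub_zero]
  rw [smul_sub, smul_comm]

lemma ubar_succ' (S : MTRun P) (r : ℕ) (ω : Ω) :
    S.ubar (r + 1) ω = P.β • S.ubar r ω + (N : ℝ)⁻¹ • ∑ i, S.G r i ω := by
  simp only [MTRun.ubar, S.hu, Finset.sum_add_distrib, smul_add,
    ← Finset.smul_sum, smul_comm (N : ℝ)⁻¹ P.β]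

end Helpers

/-- **Lemma** (evolution of the auxiliary average `z̄`). -/
theorem zbar_evolution
    (N d : ℕ) (Ω : Type) [mΩ : MeasurableSpace Ω]
    (P : MTProblem N d Ω) (S : MTRun P) :
    ∀ (r : ℕ) (ω : Ω),
      S.zbar (r + 1) ω - S.zbar r ω
        = -((S.η * (1 - P.β)⁻¹) • ((N : ℝ)⁻¹ • ∑ i, S.G r i ω)) := by
  intro r ω
  have hβ : (1 : ℝ) - P.β ≠ 0 := sub_ne_zero.mpr (ne_of_gt P.hβ1)
  match r with
  | 0 =>
    simp only [MTRun.zbar]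
    rw [xbar_succ' S 0 ω, ubar_succ' S 0 ω, ubar_zero' S ω]
    match_scalars <;> field_simp <;> ring
  | Nat.succ k =>
    simp only [MTRun.zbar]
    rw [xbar_succ' S (k + 1) ω, ubar_succ' S (k + 1) ω, xbar_succ' S k ω]
    match_scalars <;> field_simp <;> ring

end
end

section
/- (Lemma: bound on the gap between x̄ and z̄) Under the lower-bound, mixing, smoothness, and bounded-variance assumptions, for any R ≥ 0 the Momentum Tracking iterates satisfy ∑_{r=0}^R E‖x̄^{(r)} − z̄^{(r)}‖² ≤ (β²η²/(1−β)⁴) ∑_{r=0}^R E‖(1/N)∑_{i=1}^N ∇f_i(x_i^{(r)})‖² + (β²σ²η²/(N(1−β)⁴)) R. -/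
open MeasureTheory
open scoped BigOperators

noncomputable section

section AuxLemmas

open Finset

variable {N d : ℕ} {Ω : Type} [mΩ : MeasurableSpace Ω] {P : MTProblem N d Ω}

lemma MT.coord_abs_le_norm (x : EuclideanSpace ℝ (Fin d)) (k : Fin d) : |x k| ≤ ‖x‖ := by
  have h := abs_real_inner_le_norm (EuclideanSpace.single k (1:ℝ)) x
  rw [EuclideanSpace.inner_single_left] at h
  simpa [EuclideanSpace.norm_single] using h

lemma MT.inner_eq_sum_coord (x y : EuclideanSpace ℝ (Fin d)) :
    (inner ℝ x y : ℝ) = ∑ k, x k * y k := by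
  simp [PiLp.inner_apply, RCLike.inner_apply, conj_trivial, mul_comm]

lemma MT.integrable_inner2 {F : Type*} [NormedAddCommGroup F] [InnerProductSpace ℝ F]
    {μ : Measure Ω} {f g : Ω → F} (hf : MemLp f 2 μ) (hg : MemLp g 2 μ) :
    Integrable (fun ω => (inner ℝ (f ω) (g ω) : ℝ)) μ := by
  have h := L2.integrable_inner (𝕜 := ℝ) (hf.toLp f) (hg.toLp g)
  refine h.congr ?_
  filter_upwards [hf.coeFn_toLp, hg.coeFn_toLp] with ω h1 h2
  rw [h1, h2]

lemma MT.memLp_coord {μ : Measure Ω} {f : Ω → EuclideanSpace ℝ (Fin d)}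
    (hf : MemLp f 2 μ) (k : Fin d) : MemLp (fun ω => f ω k) 2 μ := by
  have h : (fun ω => (inner ℝ (f ω) (EuclideanSpace.single k (1:ℝ)) : ℝ)) = fun ω => f ω k := by
    funext ω; rw [EuclideanSpace.inner_single_right]; simp
  rw [← h]; exact hf.inner_const _

lemma MT.sq_ineq {β : ℝ} (s t : ℝ) (hβ0 : 0 ≤ β) (hβ1 : β < 1) :
    (β * s + t) ^ 2 ≤ β * s ^ 2 + (1 - β)⁻¹ * t ^ 2 := by
  have h1 : 0 < 1 - β := by linarith
  rw [← sub_nonneg]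
  have key : β*s^2 + (1-β)⁻¹*t^2 - (β*s+t)^2 = (1-β)⁻¹ * (β * ((1-β)*s - t)^2) := by
    field_simp; ring
  rw [key]
  exact mul_nonneg (inv_nonneg.mpr h1.le) (mul_nonneg hβ0 (sq_nonneg _))

/-- Abstract summation lemma for the recursion `a (r+1) ≤ β a r + K b r + c`. -/
lemma MT.sum_rec {β K c : ℝ} (hβ0 : 0 ≤ β) (hβ1 : β < 1) (hK : 0 ≤ K) (hc : 0 ≤ c)
    (a b : ℕ → ℝ) (ha0 : a 0 = 0) (ha : ∀ r, 0 ≤ a r)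
    (hrec : ∀ r, a (r + 1) ≤ β * a r + K * b r + c) (R : ℕ) :
    ∑ r ∈ Finset.range (R + 1), a r ≤
      (1 - β)⁻¹ * K * ∑ r ∈ Finset.range R, b r + (1 - β)⁻¹ * (c * R) := by
  have h1 : 0 < 1 - β := by linarith
  have key : (1 - β) * ∑ r ∈ Finset.range (R + 1), a r ≤
      K * ∑ r ∈ Finset.range R, b r + c * R := by
    have e1 : ∑ r ∈ Finset.range (R + 1), a r = ∑ r ∈ Finset.range R, a (r + 1) := by
      rw [Finset.sum_range_succ', ha0, add_zero]
    have e2 : ∑ r ∈ Finset.range R, a (r + 1) ≤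
        β * ∑ r ∈ Finset.range R, a r + K * ∑ r ∈ Finset.range R, b r + c * R := by
      calc ∑ r ∈ Finset.range R, a (r + 1)
          ≤ ∑ r ∈ Finset.range R, (β * a r + K * b r + c) :=
            Finset.sum_le_sum fun r _ => hrec r
        _ = β * ∑ r ∈ Finset.range R, a r + K * ∑ r ∈ Finset.range R, b r + c * R := by
            rw [Finset.sum_add_distrib, Finset.sum_add_distrib, ← Finset.mul_sum,
              ← Finset.mul_sum, Finset.sum_const, Finset.card_range, nsmul_eq_mul,
              mul_comm (R : ℝ) c]
    have e3 : ∑ r ∈ Finset.range R, a r ≤ ∑ r ∈ Finset.range (R + 1), a r := by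
      rw [Finset.sum_range_succ]; linarith [ha R]
    rw [e1]
    nlinarith [mul_le_mul_of_nonneg_left e3 hβ0]
  have h2 : ∑ r ∈ Finset.range (R + 1), a r
      = (1 - β)⁻¹ * ((1 - β) * ∑ r ∈ Finset.range (R + 1), a r) := by
    rw [← mul_assoc, inv_mul_cancel₀ h1.ne', one_mul]
  rw [h2]
  calc (1 - β)⁻¹ * ((1 - β) * ∑ r ∈ Finset.range (R + 1), a r)
      ≤ (1 - β)⁻¹ * (K * ∑ r ∈ Finset.range R, b r + c * R) :=
        mul_le_mul_of_nonneg_left key (inv_nonneg.mpr h1.le)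
    _ = (1 - β)⁻¹ * K * ∑ r ∈ Finset.range R, b r + (1 - β)⁻¹ * (c * R) := by ring

namespace MTRun

variable (S : MTRun P)

/-- Averaged stochastic gradient. -/
def Gbar (r : ℕ) (ω : Ω) : EuclideanSpace ℝ (Fin d) := (N : ℝ)⁻¹ • ∑ i, S.G r i ω

/-- Averaged true gradient along the iterates. -/
def gbar (r : ℕ) (ω : Ω) : EuclideanSpace ℝ (Fin d) := (N : ℝ)⁻¹ • ∑ i, P.g i (S.x r i ω)

/-- Stochastic-gradient noise of node `i`. -/
def nse (r : ℕ) (i : Fin N) (ω : Ω) : EuclideanSpace ℝ (Fin d) :=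
  S.G r i ω - P.g i (S.x r i ω)

/-- Averaged noise. -/
def nbar (r : ℕ) (ω : Ω) : EuclideanSpace ℝ (Fin d) := (N : ℝ)⁻¹ • ∑ i, S.nse r i ω

lemma sm_gx (r : ℕ) (i : Fin N) :
    StronglyMeasurable[S.ℱ r] (fun ω => P.g i (S.x r i ω)) := by
  have hlip : LipschitzWith (Real.toNNReal P.L) (P.g i) :=
    LipschitzWith.of_dist_le_mul fun v w => by
      rw [dist_eq_norm, dist_eq_norm, Real.coe_toNNReal _ P.hL.le]; exact P.hsmooth i v w
  exact hlip.continuous.comp_stronglyMeasurable (S.hadapted_x r i)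

lemma mem_xuc : ∀ r : ℕ, (∀ i, MemLp (S.x r i) 2 P.μ) ∧ (∀ i, MemLp (S.u r i) 2 P.μ)
    ∧ (∀ i, MemLp (S.c r i) 2 P.μ) := by
  haveI := P.prob
  intro r
  induction r with
  | zero =>
    have hu : ∀ i, MemLp (S.u 0 i) 2 P.μ := by
      intro i
      have h : S.u 0 i = fun ω => (1 - P.β)⁻¹ • (S.G 0 i ω - (N : ℝ)⁻¹ • ∑ j, S.G 0 j ω) :=
        funext (S.hu0 i)
      rw [h]
      exact (((S.hmeas 0 i).sub ((memLp_finset_sum _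
        (fun j _ => S.hmeas 0 j)).const_smul (N : ℝ)⁻¹)).const_smul (1 - P.β)⁻¹)
    refine ⟨fun i => ?_, hu, fun i => ?_⟩
    · rw [S.hx0 i]; exact memLp_const _
    · rw [S.hc0 i]; exact hu i
  | succ r ih =>
    obtain ⟨hx, hu, hc⟩ := ih
    have hu' : ∀ i, MemLp (S.u (r + 1) i) 2 P.μ := fun i => by
      have h : S.u (r + 1) i = fun ω => P.β • S.u r i ω + S.G r i ω := funext (S.hu r i)
      rw [h]; exact ((hu i).const_smul P.β).add (S.hmeas r i)
    refine ⟨fun i => ?_, hu', fun i => ?_⟩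
    · have h : S.x (r + 1) i
          = fun ω => (∑ j, P.W i j • S.x r j ω) - S.η • (S.u (r + 1) i ω - S.c r i ω) :=
        funext (S.hx r i)
      rw [h]
      exact (memLp_finset_sum _ (fun j _ => (hx j).const_smul (P.W i j))).sub
        (((hu' i).sub (hc i)).const_smul S.η)
    · have h : S.c (r + 1) i
          = fun ω => (∑ j, P.W i j • (S.c r j ω - S.u (r + 1) j ω)) + S.u (r + 1) i ω :=
        funext (S.hc r i)
      rw [h]
      exact (memLp_finset_sum _ (fun j _ => ((hc j).sub (hu' j)).const_smul (P.W i j))).add (hu' i)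

lemma mem_gx (r : ℕ) (i : Fin N) : MemLp (fun ω => P.g i (S.x r i ω)) 2 P.μ := by
  haveI := P.prob
  have hx := (S.mem_xuc r).1 i
  have hb : MemLp (fun ω => P.L * ‖S.x r i ω‖ + ‖P.g i 0‖) 2 P.μ :=
    (hx.norm.const_mul _).add (memLp_const _)
  refine hb.of_le ((S.sm_gx r i).mono (S.ℱ.le r)).aestronglyMeasurable
    (Filter.Eventually.of_forall fun ω => ?_)
  have h2 : ‖P.g i (S.x r i ω)‖ - ‖P.g i 0‖ ≤ ‖P.g i (S.x r i ω) - P.g i 0‖ :=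
    norm_sub_norm_le _ _
  have h3 := P.hsmooth i (S.x r i ω) 0
  rw [sub_zero] at h3
  have h4 : 0 ≤ P.L * ‖S.x r i ω‖ + ‖P.g i 0‖ :=
    add_nonneg (mul_nonneg P.hL.le (norm_nonneg _)) (norm_nonneg _)
  rw [Real.norm_eq_abs, abs_of_nonneg h4]
  linarith

lemma mem_nse (r : ℕ) (i : Fin N) : MemLp (S.nse r i) 2 P.μ :=
  (S.hmeas r i).sub (S.mem_gx r i)

lemma mem_Gbar (r : ℕ) : MemLp (S.Gbar r) 2 P.μ :=
  (memLp_finset_sum _ (fun i _ => S.hmeas r i)).const_smul (N : ℝ)⁻¹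

lemma mem_gbar (r : ℕ) : MemLp (S.gbar r) 2 P.μ :=
  (memLp_finset_sum _ (fun i _ => S.mem_gx r i)).const_smul (N : ℝ)⁻¹

lemma mem_nbar (r : ℕ) : MemLp (S.nbar r) 2 P.μ :=
  (memLp_finset_sum _ (fun i _ => S.mem_nse r i)).const_smul (N : ℝ)⁻¹

lemma sm_gbar (r : ℕ) : StronglyMeasurable[S.ℱ r] (S.gbar r) :=
  (Finset.stronglyMeasurable_fun_sum _ (fun i _ => S.sm_gx r i)).const_smul (N : ℝ)⁻¹

/-- Set integral of the noise over `ℱ r`-measurable sets vanishes. -/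
lemma setInt_nse (r : ℕ) (i : Fin N) {s : Set Ω} (hs : MeasurableSet[S.ℱ r] s) :
    ∫ ω in s, S.nse r i ω ∂P.μ = 0 := by
  haveI := P.prob
  have hG : Integrable (S.G r i) P.μ := (S.hmeas r i).integrable one_le_two
  have hg : Integrable (fun ω => P.g i (S.x r i ω)) P.μ := (S.mem_gx r i).integrable one_le_two
  have h1 : ∫ ω in s, S.G r i ω ∂P.μ = ∫ ω in s, P.g i (S.x r i ω) ∂P.μ := by
    rw [← setIntegral_condExp (S.ℱ.le r) hG hs]
    exact integral_congr_ae (ae_restrict_of_ae (S.hunbiased r i))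
  have h2 : ∫ ω in s, S.nse r i ω ∂P.μ
      = ∫ ω in s, S.G r i ω ∂P.μ - ∫ ω in s, P.g i (S.x r i ω) ∂P.μ :=
    integral_sub hG.integrableOn hg.integrableOn
  rw [h2, h1, sub_self]

/-- Cross terms between `ℱ r`-measurable `L²` functions and the round-`r` noise vanish. -/
lemma cross_zero (r : ℕ) {Y : Ω → EuclideanSpace ℝ (Fin d)}
    (hYsm : StronglyMeasurable[S.ℱ r] Y) (hYm : MemLp Y 2 P.μ) (i : Fin N) :
    ∫ ω, (inner ℝ (Y ω) (S.nse r i ω) : ℝ) ∂P.μ = 0 := by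
  haveI := P.prob
  have hm : S.ℱ r ≤ mΩ := S.ℱ.le r
  have hZm : MemLp (S.nse r i) 2 P.μ := S.mem_nse r i
  have hYk : ∀ k, MemLp (fun ω => Y ω k) 2 P.μ := fun k => MT.memLp_coord hYm k
  have hZk : ∀ k, MemLp (fun ω => S.nse r i ω k) 2 P.μ := fun k => MT.memLp_coord hZm k
  have hint : ∀ k : Fin d, Integrable (fun ω => Y ω k * S.nse r i ω k) P.μ := by
    intro k
    have h2 := MT.integrable_inner2 (hYk k) (hZk k)
    refine h2.congr (Filter.Eventually.of_forall fun ω => ?_)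
    simp [RCLike.inner_apply, conj_trivial, mul_comm]
  have hcond : ∀ k : Fin d,
      (P.μ)[(fun ω => S.nse r i ω k)|S.ℱ r] =ᵐ[P.μ] 0 := by
    intro k
    refine ((ae_eq_condExp_of_forall_setIntegral_eq hm ((hZk k).integrable one_le_two)
      (fun s _ _ => integrableOn_zero) (fun s hs _ => ?_)
      (StronglyMeasurable.aestronglyMeasurable
        (@stronglyMeasurable_zero _ _ (S.ℱ r) _ _)))).symm
    have h5 : ∫ ω in s, (inner ℝ (EuclideanSpace.single k (1:ℝ)) (S.nse r i ω) : ℝ) ∂P.μ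
        = (inner ℝ (EuclideanSpace.single k (1:ℝ)) (∫ ω in s, S.nse r i ω ∂P.μ) : ℝ) :=
      integral_inner (hZm.integrable one_le_two).integrableOn _
    rw [S.setInt_nse r i hs, inner_zero_right] at h5
    have h6 : ∫ ω in s, S.nse r i ω k ∂P.μ = 0 := by
      rw [← h5]
      refine integral_congr_ae (Filter.Eventually.of_forall fun ω => ?_)
      show S.nse r i ω k = (inner ℝ (EuclideanSpace.single k (1:ℝ)) (S.nse r i ω) : ℝ)
      rw [EuclideanSpace.inner_single_left]; simp
    simp [h6]
  have hYZ : (fun ω => (inner ℝ (Y ω) (S.nse r i ω) : ℝ))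
      = fun ω => ∑ k, Y ω k * S.nse r i ω k := by
    funext ω; exact MT.inner_eq_sum_coord _ _
  rw [hYZ, integral_finset_sum _ (fun k _ => hint k)]
  refine Finset.sum_eq_zero fun k _ => ?_
  have hYk_sm : StronglyMeasurable[S.ℱ r] (fun ω => Y ω k) := by
    exact (EuclideanSpace.proj k : EuclideanSpace ℝ (Fin d) →L[ℝ] ℝ)
      |>.continuous.comp_stronglyMeasurable hYsm
  have hmul := condExp_mul_of_stronglyMeasurable_left (μ := P.μ) hYk_sm
    (hint k) ((hZk k).integrable one_le_two)
  have hzero : (P.μ)[(fun ω => Y ω k) * (fun ω => S.nse r i ω k)|S.ℱ r] =ᵐ[P.μ] 0 := by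
    refine hmul.trans ?_
    filter_upwards [hcond k] with ω hω
    simp [hω]
  calc ∫ ω, Y ω k * S.nse r i ω k ∂P.μ
      = ∫ ω, ((P.μ)[(fun ω => Y ω k) * (fun ω => S.nse r i ω k)|S.ℱ r]) ω ∂P.μ :=
        (integral_condExp hm).symm
    _ = 0 := by rw [integral_congr_ae hzero]; simp

/-- Second moment of the averaged noise. -/
lemma int_nbar_sq (r : ℕ) : ∫ ω, ‖S.nbar r ω‖ ^ 2 ∂P.μ ≤ P.σ ^ 2 / N := by
  haveI := P.prob
  have hN : (0:ℝ) < N := Nat.cast_pos.mpr P.hN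
  have hmem : ∀ i : Fin N, MemLp (S.nse r i) 2 P.μ := fun i => S.mem_nse r i
  have key : ∫ ω, ‖∑ i, S.nse r i ω‖ ^ 2 ∂P.μ ≤ N * P.σ ^ 2 := by
    have expand : ∀ ω : Ω, ‖∑ i, S.nse r i ω‖ ^ 2
        = ∑ i, ∑ j, (inner ℝ (S.nse r i ω) (S.nse r j ω) : ℝ) := by
      intro ω
      rw [← real_inner_self_eq_norm_sq, sum_inner]
      exact Finset.sum_congr rfl fun i _ => inner_sum _ _ _
    calc ∫ ω, ‖∑ i, S.nse r i ω‖ ^ 2 ∂P.μ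
        = ∑ i, ∑ j, ∫ ω, (inner ℝ (S.nse r i ω) (S.nse r j ω) : ℝ) ∂P.μ := by
          simp_rw [expand]
          rw [integral_finset_sum _ (fun i _ => integrable_finset_sum _
            (fun j _ => MT.integrable_inner2 (hmem i) (hmem j)))]
          exact Finset.sum_congr rfl fun i _ =>
            integral_finset_sum _ (fun j _ => MT.integrable_inner2 (hmem i) (hmem j))
      _ ≤ ∑ _i : Fin N, P.σ ^ 2 := by
          refine Finset.sum_le_sum fun i _ => ?_
          have h1 : ∑ j, ∫ ω, (inner ℝ (S.nse r i ω) (S.nse r j ω) : ℝ) ∂P.μ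
              = ∫ ω, (inner ℝ (S.nse r i ω) (S.nse r i ω) : ℝ) ∂P.μ := by
            refine Finset.sum_eq_single_of_mem i (Finset.mem_univ i) (fun j _ hj => ?_)
            exact S.horth r r i j (by simp [hj.symm])
          rw [h1]
          have h2 : ∫ ω, (inner ℝ (S.nse r i ω) (S.nse r i ω) : ℝ) ∂P.μ
              = ∫ ω, ‖S.nse r i ω‖ ^ 2 ∂P.μ := by
            refine integral_congr_ae (Filter.Eventually.of_forall fun ω => ?_)
            show (inner ℝ (S.nse r i ω) (S.nse r i ω) : ℝ) = ‖S.nse r i ω‖ ^ 2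
            rw [real_inner_self_eq_norm_sq]
          rw [h2]
          exact S.hvar r i
      _ = N * P.σ ^ 2 := by
          rw [Finset.sum_const, Finset.card_univ, Fintype.card_fin, nsmul_eq_mul]
  have hpt : ∀ ω : Ω, ‖S.nbar r ω‖ ^ 2 = ((N:ℝ)⁻¹) ^ 2 * ‖∑ i, S.nse r i ω‖ ^ 2 := by
    intro ω
    show ‖(N:ℝ)⁻¹ • ∑ i, S.nse r i ω‖ ^ 2 = _
    rw [norm_smul, Real.norm_eq_abs, abs_of_nonneg (inv_nonneg.mpr hN.le), mul_pow]
  calc ∫ ω, ‖S.nbar r ω‖ ^ 2 ∂P.μ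
      = ((N:ℝ)⁻¹) ^ 2 * ∫ ω, ‖∑ i, S.nse r i ω‖ ^ 2 ∂P.μ := by
        simp_rw [hpt]; exact integral_const_mul _ _
    _ ≤ ((N:ℝ)⁻¹) ^ 2 * ((N:ℝ) * P.σ ^ 2) :=
        mul_le_mul_of_nonneg_left key (by positivity)
    _ = P.σ ^ 2 / N := by field_simp

lemma ubar_zero : S.ubar 0 = fun _ => 0 := by
  haveI := P.prob
  funext ω
  have hN : ((N:ℝ)) ≠ 0 := Nat.cast_ne_zero.mpr P.hN.ne'
  show (N : ℝ)⁻¹ • ∑ i, S.u 0 i ω = 0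
  have h1 : ∑ i, S.u 0 i ω
      = (1 - P.β)⁻¹ • ((∑ i, S.G 0 i ω) - (N:ℝ) • ((N:ℝ)⁻¹ • ∑ j, S.G 0 j ω)) := by
    simp_rw [S.hu0]
    rw [← Finset.smul_sum]
    congr 1
    rw [Finset.sum_sub_distrib]
    congr 1
    rw [Finset.sum_const, Finset.card_univ, Fintype.card_fin, ← Nat.cast_smul_eq_nsmul ℝ]
  rw [h1, smul_inv_smul₀ hN, sub_self, smul_zero, smul_zero]

lemma ubar_succ (r : ℕ) : S.ubar (r + 1) = fun ω => P.β • S.ubar r ω + S.Gbar r ω := by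
  funext ω
  show (N : ℝ)⁻¹ • ∑ i, S.u (r+1) i ω = _
  simp_rw [S.hu]
  rw [Finset.sum_add_distrib, smul_add, ← Finset.smul_sum, smul_comm]
  rfl

lemma Gbar_eq (r : ℕ) : S.Gbar r = fun ω => S.gbar r ω + S.nbar r ω := by
  funext ω
  show (N : ℝ)⁻¹ • ∑ i, S.G r i ω = (N : ℝ)⁻¹ • ∑ i, P.g i (S.x r i ω)
      + (N : ℝ)⁻¹ • ∑ i, S.nse r i ω
  rw [← smul_add, ← Finset.sum_add_distrib]
  congr 1
  refine Finset.sum_congr rfl fun i _ => ?_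
  show S.G r i ω = P.g i (S.x r i ω) + (S.G r i ω - P.g i (S.x r i ω))
  abel

lemma sm_ubar (r : ℕ) : StronglyMeasurable[S.ℱ r] (S.ubar r) := by
  induction r with
  | zero => rw [S.ubar_zero]; exact stronglyMeasurable_const
  | succ r ih =>
    rw [S.ubar_succ r]
    exact ((ih.mono (S.ℱ.mono (Nat.le_succ r))).const_smul P.β).add
      ((Finset.stronglyMeasurable_fun_sum _ (fun i _ => S.hadapted_G r i)).const_smul (N : ℝ)⁻¹)

lemma mem_ubar (r : ℕ) : MemLp (S.ubar r) 2 P.μ := by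
  haveI := P.prob
  induction r with
  | zero => rw [S.ubar_zero]; exact memLp_const _
  | succ r ih =>
    rw [S.ubar_succ r]
    exact (ih.const_smul P.β).add (S.mem_Gbar r)

lemma cbar_eq_zero : ∀ r : ℕ, S.cbar r = fun _ => 0 := by
  intro r
  induction r with
  | zero =>
    have h : S.cbar 0 = S.ubar 0 := by
      funext ω
      show (N : ℝ)⁻¹ • ∑ i, S.c 0 i ω = (N : ℝ)⁻¹ • ∑ i, S.u 0 i ω
      simp_rw [S.hc0]
    rw [h, S.ubar_zero]
  | succ r ih =>
    funext ω
    have hW : ∑ i, ∑ j, P.W i j • (S.c r j ω - S.u (r+1) j ω)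
        = ∑ j, (S.c r j ω - S.u (r+1) j ω) := by
      rw [Finset.sum_comm]
      refine Finset.sum_congr rfl fun j _ => ?_
      rw [← Finset.sum_smul, P.hWcol j, one_smul]
    show (N : ℝ)⁻¹ • ∑ i, S.c (r+1) i ω = 0
    simp_rw [S.hc]
    rw [Finset.sum_add_distrib, hW, Finset.sum_sub_distrib]
    have h2 : (N : ℝ)⁻¹ • (∑ j, S.c r j ω - ∑ j, S.u (r+1) j ω + ∑ i, S.u (r+1) i ω)
        = (N : ℝ)⁻¹ • ∑ j, S.c r j ω := by rw [sub_add_cancel]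
    rw [h2]
    have h3 : (N : ℝ)⁻¹ • ∑ j, S.c r j ω = S.cbar r ω := rfl
    rw [h3, ih]

lemma xbar_succ (r : ℕ) : S.xbar (r + 1) = fun ω => S.xbar r ω - S.η • S.ubar (r + 1) ω := by
  funext ω
  have hW : ∑ i, ∑ j, P.W i j • S.x r j ω = ∑ j, S.x r j ω := by
    rw [Finset.sum_comm]
    refine Finset.sum_congr rfl fun j _ => ?_
    rw [← Finset.sum_smul, P.hWcol j, one_smul]
  show (N : ℝ)⁻¹ • ∑ i, S.x (r+1) i ω = _
  simp_rw [S.hx]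
  rw [Finset.sum_sub_distrib, hW, smul_sub]
  have h1 : (N : ℝ)⁻¹ • ∑ i, S.η • (S.u (r+1) i ω - S.c r i ω)
      = S.η • (S.ubar (r+1) ω - S.cbar r ω) := by
    rw [← Finset.smul_sum, smul_comm, Finset.sum_sub_distrib, smul_sub]
    rfl
  rw [h1, S.cbar_eq_zero r]
  show S.xbar r ω - S.η • (S.ubar (r+1) ω - 0) = S.xbar r ω - S.η • S.ubar (r+1) ω
  rw [sub_zero]

/-- The gap between `x̄` and `z̄` is a multiple of `ū`. -/
lemma xbar_sub_zbar (r : ℕ) (ω : Ω) :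
    S.xbar (r + 1) ω - S.zbar (r + 1) ω
      = (P.β * (1 - P.β)⁻¹ * S.η) • S.ubar (r + 1) ω := by
  have h1β : (1 : ℝ) - P.β ≠ 0 := by have := P.hβ1; intro h; linarith [h]
  have hx' : S.xbar r ω = S.xbar (r+1) ω + S.η • S.ubar (r+1) ω := by
    rw [S.xbar_succ r]; show S.xbar r ω = S.xbar r ω - S.η • S.ubar (r+1) ω + S.η • S.ubar (r+1) ω
    abel
  show S.xbar (r+1) ω - ((1 - P.β)⁻¹ • S.xbar (r + 1) ω - (P.β * (1 - P.β)⁻¹) • S.xbar r ω) = _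
  rw [hx']
  have e : (1:ℝ) - (1 - P.β)⁻¹ + P.β * (1 - P.β)⁻¹ = 0 := by field_simp; ring
  linear_combination (norm := module) e • S.xbar (r+1) ω

/-- One-step second-moment bound on `ū`. -/
lemma step_bound (r : ℕ) :
    ∫ ω, ‖S.ubar (r + 1) ω‖ ^ 2 ∂P.μ
      ≤ P.β * ∫ ω, ‖S.ubar r ω‖ ^ 2 ∂P.μ
        + (1 - P.β)⁻¹ * ∫ ω, ‖S.gbar r ω‖ ^ 2 ∂P.μ + P.σ ^ 2 / N := by
  haveI := P.prob
  set Y : Ω → EuclideanSpace ℝ (Fin d) := fun ω => P.β • S.ubar r ω + S.gbar r ω with hY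
  have hmemY : MemLp Y 2 P.μ := ((S.mem_ubar r).const_smul P.β).add (S.mem_gbar r)
  have hsmY : StronglyMeasurable[S.ℱ r] Y :=
    ((S.sm_ubar r).const_smul P.β).add (S.sm_gbar r)
  have hdec : S.ubar (r + 1) = fun ω => Y ω + S.nbar r ω := by
    rw [S.ubar_succ r, S.Gbar_eq r]
    funext ω
    show P.β • S.ubar r ω + (S.gbar r ω + S.nbar r ω) = _
    rw [hY]; show _ = P.β • S.ubar r ω + S.gbar r ω + S.nbar r ω; abel
  have hcross : ∫ ω, (inner ℝ (Y ω) (S.nbar r ω) : ℝ) ∂P.μ = 0 := by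
    have hpt : ∀ ω : Ω, (inner ℝ (Y ω) (S.nbar r ω) : ℝ)
        = (N:ℝ)⁻¹ * ∑ i, (inner ℝ (Y ω) (S.nse r i ω) : ℝ) := by
      intro ω
      show (inner ℝ (Y ω) ((N : ℝ)⁻¹ • ∑ i, S.nse r i ω) : ℝ) = _
      rw [real_inner_smul_right, inner_sum]
    simp_rw [hpt]
    rw [integral_const_mul, integral_finset_sum _
      (fun i _ => MT.integrable_inner2 hmemY (S.mem_nse r i))]
    rw [Finset.sum_eq_zero (fun i _ => S.cross_zero r hsmY hmemY i), mul_zero]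
  have hintY : Integrable (fun ω => ‖Y ω‖ ^ 2) P.μ := hmemY.norm.integrable_sq
  have hintn : Integrable (fun ω => ‖S.nbar r ω‖ ^ 2) P.μ := (S.mem_nbar r).norm.integrable_sq
  have hintYn : Integrable (fun ω => 2 * (inner ℝ (Y ω) (S.nbar r ω) : ℝ)) P.μ :=
    (MT.integrable_inner2 hmemY (S.mem_nbar r)).const_mul 2
  have hsplit : ∫ ω, ‖S.ubar (r + 1) ω‖ ^ 2 ∂P.μ
      = ∫ ω, ‖Y ω‖ ^ 2 ∂P.μ + ∫ ω, ‖S.nbar r ω‖ ^ 2 ∂P.μ := by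
    rw [hdec]
    have hpt : ∀ ω : Ω, ‖Y ω + S.nbar r ω‖ ^ 2
        = ‖Y ω‖ ^ 2 + 2 * (inner ℝ (Y ω) (S.nbar r ω) : ℝ) + ‖S.nbar r ω‖ ^ 2 := by
      intro ω; rw [← norm_add_sq_real]
    simp_rw [hpt]
    have hsum : Integrable (fun ω => ‖Y ω‖ ^ 2 + 2 * (inner ℝ (Y ω) (S.nbar r ω) : ℝ)) P.μ :=
      hintY.add hintYn
    rw [integral_add hsum hintn, integral_add hintY hintYn,
      integral_const_mul, hcross, mul_zero, add_zero]
  have hintu : Integrable (fun ω => ‖S.ubar r ω‖ ^ 2) P.μ := (S.mem_ubar r).norm.integrable_sq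
  have hintg : Integrable (fun ω => ‖S.gbar r ω‖ ^ 2) P.μ := (S.mem_gbar r).norm.integrable_sq
  have hYbound : ∫ ω, ‖Y ω‖ ^ 2 ∂P.μ
      ≤ P.β * ∫ ω, ‖S.ubar r ω‖ ^ 2 ∂P.μ + (1 - P.β)⁻¹ * ∫ ω, ‖S.gbar r ω‖ ^ 2 ∂P.μ := by
    rw [← integral_const_mul, ← integral_const_mul,
      ← integral_add (hintu.const_mul _) (hintg.const_mul _)]
    refine integral_mono hintY ((hintu.const_mul _).add (hintg.const_mul _)) fun ω => ?_
    have h1 : ‖Y ω‖ ≤ P.β * ‖S.ubar r ω‖ + ‖S.gbar r ω‖ := by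
      refine (norm_add_le _ _).trans ?_
      rw [norm_smul, Real.norm_eq_abs, abs_of_nonneg P.hβ0]
    calc ‖Y ω‖ ^ 2 ≤ (P.β * ‖S.ubar r ω‖ + ‖S.gbar r ω‖) ^ 2 :=
          pow_le_pow_left₀ (norm_nonneg _) h1 2
      _ ≤ P.β * ‖S.ubar r ω‖ ^ 2 + (1 - P.β)⁻¹ * ‖S.gbar r ω‖ ^ 2 :=
          MT.sq_ineq _ _ P.hβ0 P.hβ1
  rw [hsplit]
  have := S.int_nbar_sq r
  linarith

end MTRun

end AuxLemmas
/-- **Lemma** (bound on the gap between `x̄` and `z̄`): for any `R ≥ 0`,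
`∑_{r=0}^R E‖x̄^{(r)} − z̄^{(r)}‖² ≤ (β²η²/(1−β)⁴) ∑_{r=0}^R E‖(1/N)∑ᵢ∇f_i(x_i^{(r)})‖²
  + (β²σ²η²/(N(1−β)⁴)) R`. -/
theorem xbar_zbar_gap_bound
    (N d : ℕ) (Ω : Type) [mΩ : MeasurableSpace Ω]
    (P : MTProblem N d Ω) (S : MTRun P) (R : ℕ) :
    ∑ r ∈ Finset.range (R + 1), ∫ ω, ‖S.xbar r ω - S.zbar r ω‖ ^ 2 ∂P.μ ≤
      P.β ^ 2 * S.η ^ 2 / (1 - P.β) ^ 4 *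
          ∑ r ∈ Finset.range (R + 1),
            ∫ ω, ‖(N : ℝ)⁻¹ • ∑ i, P.g i (S.x r i ω)‖ ^ 2 ∂P.μ
        + P.β ^ 2 * P.σ ^ 2 * S.η ^ 2 / ((N : ℝ) * (1 - P.β) ^ 4) * R := by
  haveI := P.prob
  have h1 : (0:ℝ) < 1 - P.β := by linarith [P.hβ1]
  have hN : (0:ℝ) < N := Nat.cast_pos.mpr P.hN
  set q : ℝ := (1 - P.β)⁻¹ with hq
  have hq0 : 0 < q := inv_pos.mpr h1
  have hq1 : 1 ≤ q := by
    rw [hq]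
    rw [le_inv_comm₀ one_pos h1]
    · linarith [P.hβ0]
  set a : ℕ → ℝ := fun r => ∫ ω, ‖S.ubar r ω‖ ^ 2 ∂P.μ with ha_def
  set b : ℕ → ℝ := fun r => ∫ ω, ‖(N : ℝ)⁻¹ • ∑ i, P.g i (S.x r i ω)‖ ^ 2 ∂P.μ with hb_def
  have ha0 : a 0 = 0 := by
    rw [ha_def]; simp only [S.ubar_zero]; simp
  have ha : ∀ r, 0 ≤ a r := fun r => integral_nonneg fun ω => sq_nonneg _
  have hb : ∀ r, 0 ≤ b r := fun r => integral_nonneg fun ω => sq_nonneg _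
  have hrec : ∀ r, a (r + 1) ≤ P.β * a r + q * b r + P.σ ^ 2 / N := fun r => S.step_bound r
  have hsum := MT.sum_rec P.hβ0 P.hβ1 hq0.le (div_nonneg (sq_nonneg _) hN.le) a b ha0 ha hrec R
  have hgap : ∀ r, ∫ ω, ‖S.xbar r ω - S.zbar r ω‖ ^ 2 ∂P.μ = (P.β * q * S.η) ^ 2 * a r := by
    intro r
    have hcnn : 0 ≤ P.β * q * S.η := mul_nonneg (mul_nonneg P.hβ0 hq0.le) S.hη.le
    cases r with
    | zero =>
      rw [ha0, mul_zero]
      have : ∀ ω : Ω, ‖S.xbar 0 ω - S.zbar 0 ω‖ ^ 2 = 0 := by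
        intro ω
        show ‖S.xbar 0 ω - S.xbar 0 ω‖ ^ 2 = 0
        rw [sub_self, norm_zero]; norm_num
      simp_rw [this]; exact integral_zero _ _
    | succ r =>
      have hpt : ∀ ω, ‖S.xbar (r+1) ω - S.zbar (r+1) ω‖ ^ 2
          = (P.β * q * S.η) ^ 2 * ‖S.ubar (r+1) ω‖ ^ 2 := by
        intro ω
        rw [S.xbar_sub_zbar r ω, norm_smul, Real.norm_eq_abs, abs_of_nonneg hcnn, mul_pow]
      simp_rw [hpt]
      exact integral_const_mul _ _
  calc ∑ r ∈ Finset.range (R + 1), ∫ ω, ‖S.xbar r ω - S.zbar r ω‖ ^ 2 ∂P.μ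
      = (P.β * q * S.η) ^ 2 * ∑ r ∈ Finset.range (R + 1), a r := by
        rw [Finset.mul_sum]; exact Finset.sum_congr rfl fun r _ => hgap r
    _ ≤ (P.β * q * S.η) ^ 2 *
        (q * q * ∑ r ∈ Finset.range R, b r + q * (P.σ ^ 2 / N * R)) :=
        mul_le_mul_of_nonneg_left hsum (sq_nonneg _)
    _ = P.β ^ 2 * S.η ^ 2 * q ^ 4 * ∑ r ∈ Finset.range R, b r
        + (P.β ^ 2 * S.η ^ 2 * P.σ ^ 2 / N * R) * q ^ 3 := by ring
    _ ≤ P.β ^ 2 * S.η ^ 2 * q ^ 4 * ∑ r ∈ Finset.range (R + 1), b r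
        + (P.β ^ 2 * S.η ^ 2 * P.σ ^ 2 / N * R) * q ^ 4 := by
        have hc1 : (0:ℝ) ≤ P.β ^ 2 * S.η ^ 2 * q ^ 4 :=
          mul_nonneg (mul_nonneg (sq_nonneg _) (sq_nonneg _)) (pow_nonneg hq0.le 4)
        have hc2 : (0:ℝ) ≤ P.β ^ 2 * S.η ^ 2 * P.σ ^ 2 / N * R :=
          mul_nonneg (div_nonneg
            (mul_nonneg (mul_nonneg (sq_nonneg _) (sq_nonneg _)) (sq_nonneg _)) hN.le)
            (Nat.cast_nonneg R)
        refine add_le_add (mul_le_mul_of_nonneg_left ?_ hc1)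
          (mul_le_mul_of_nonneg_left (pow_le_pow_right₀ hq1 (by norm_num)) hc2)
        rw [Finset.sum_range_succ]; linarith [hb R]
    _ = P.β ^ 2 * S.η ^ 2 / (1 - P.β) ^ 4 * ∑ r ∈ Finset.range (R + 1), b r
        + P.β ^ 2 * P.σ ^ 2 * S.η ^ 2 / ((N : ℝ) * (1 - P.β) ^ 4) * R := by
        simp only [div_eq_mul_inv, mul_inv]
        rw [hq, inv_pow]
        ring
end
end
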